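/- arXiv:1304.1641 — 3 statements merged into one kernel-verified Lean document; each statement's English description precedes it below -/
import Mathlib

section
/- Let V be the space of formal Laurent series in variables x_{12}, x_{13}, x_{23}, x_{14}, x_{24}, x_{34}, and let F ∈ End(V^{⊗...}) act on the three variables (x_{ab}, x_{ac}, x_{bc}) by (F_{abc} f)(..., x_{ab}, x_{ac}, x_{bc}, ...) = f(..., x_{ab}x_{ac}/x_{bc}, x_{bc}, x_{ac}, ...). Then F satisfies the tetrahedron equation F_{123} F_{124} F_{134} F_{234} = F_{234} F_{134} F_{124} F_{123}, and moreover F_{abc}² = id. -/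
/-- Formal Laurent series in the variables `x_{ij}` are encoded by their coefficient
functions: a function assigning to each exponent vector `e : ℕ × ℕ → ℤ` (only the
components at index pairs matter) the coefficient of the monomial `∏ x_{ij}^{e ij}`. -/
abbrev LSeries' : Type := ((ℕ × ℕ) → ℤ) → ℚ

/-- The operator `F_{abc}` acting on Laurent series in the variables
`x_{ab}, x_{ac}, x_{bc}` by `(F_{abc} f)(…, x_{ab}, x_{ac}, x_{bc}, …) =
f(…, x_{ab}x_{ac}/x_{bc}, x_{bc}, x_{ac}, …)`; on monomials,
`F : x_{ab}^k x_{ac}^l x_{bc}^m ↦ x_{ab}^k x_{ac}^{m+k} x_{bc}^{l-k}`. -/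
def Fop (a b c : ℕ) (f : LSeries') : LSeries' := fun e =>
  f (Function.update (Function.update e (a, c) (e (b, c) + e (a, b)))
      (b, c) (e (a, c) - e (a, b)))

set_option maxHeartbeats 2000000 in
/-- `F` satisfies the tetrahedron equation
`F₁₂₃ F₁₂₄ F₁₃₄ F₂₃₄ = F₂₃₄ F₁₃₄ F₁₂₄ F₁₂₃`, and moreover `F_{abc}² = id`. -/
theorem Fop_tetrahedron_and_involutive :
    (Fop 1 2 3 ∘ Fop 1 2 4 ∘ Fop 1 3 4 ∘ Fop 2 3 4 =
      Fop 2 3 4 ∘ Fop 1 3 4 ∘ Fop 1 2 4 ∘ Fop 1 2 3) ∧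
    (∀ a b c : ℕ, a < b → b < c → Fop a b c ∘ Fop a b c = id) := by
  constructor
  · funext f e
    simp only [Function.comp_apply, Fop]
    congr 1
    funext ⟨i, j⟩
    simp [Function.update_apply, Prod.ext_iff]
    split_ifs <;> omega
  · intro a b c hab hbc
    have h1 : a ≠ b := hab.ne
    have h2 : b ≠ c := hbc.ne
    have h3 : a ≠ c := (hab.trans hbc).ne
    funext f e
    simp only [Function.comp_apply, Fop, id_eq]
    congr 1
    funext ⟨i, j⟩
    simp [Function.update_apply, Prod.ext_iff, h1, h2, h3, h1.symm, h2.symm, h3.symm]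
    split_ifs <;> simp_all
end

section
/- Let T_4 be the quantum torus on generators Z_{ij}, 1 ≤ i < j ≤ 4, associated to the quiver Q_4, and let E be the quantum exponential. Then the ten-term cyclic identity holds: E(Z12)E(Z12Z23)E(Z12Z23Z34)E(Z13)E(Z13Z24)E(Z14)E(Z23)E(Z23Z34)E(Z24)E(Z34) = E(Z14)E(Z14Z13)E(Z14Z13Z12)E(Z24)E(Z24Z23)E(Z34)E(Z13)E(Z13Z12)E(Z23)E(Z12), the right-hand side being the image of the left under the rotation automorphism ρ(Z_{ij}) = Z_{j−i,5−i}. -/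
/-- Coefficients of the quantum exponential series
`E(x) = ∑ (-x)^n / ((1-q)⋯(1-q^n))` with `q = RatFunc.X`. -/
noncomputable def qcoef (n : ℕ) : RatFunc ℚ :=
  (-1 : RatFunc ℚ) ^ n / ∏ k ∈ Finset.range n, (1 - (RatFunc.X : RatFunc ℚ) ^ (k + 1))

/-- The quantum exponential of an element of a topological algebra over `ℚ(q)`. -/
noncomputable def qexp {A : Type*} [Ring A] [Algebra (RatFunc ℚ) A] [TopologicalSpace A]
    (x : A) : A :=
  ∑' n : ℕ, qcoef n • x ^ n

/-- Entry `B_{v,w}` of the skew-symmetric incidence matrix of the triangular quiver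
`Q_N`: edges go `(i,j)→(i,j+1)`, `(i,j)→(i+1,j)` and `(i+1,j+1)→(i,j)`. -/
def Bfun (v w : ℕ × ℕ) : ℤ :=
  if (w = (v.1, v.2 + 1) ∨ w = (v.1 + 1, v.2) ∨ v = (w.1 + 1, w.2 + 1)) then 1
  else if (v = (w.1, w.2 + 1) ∨ v = (w.1 + 1, w.2) ∨ w = (v.1 + 1, v.2 + 1)) then -1
  else 0

/-- The vertex set of the quiver `Q_N`: pairs `(i,j)` with `1 ≤ i < j ≤ N`. -/
def vertexSet (N : ℕ) : Finset (ℕ × ℕ) :=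
  (Finset.Icc 1 N ×ˢ Finset.Icc 1 N).filter fun p => p.1 < p.2

set_option linter.unusedSectionVars false
set_option maxHeartbeats 4000000

notation "K" => RatFunc ℚ
noncomputable abbrev qq : K := RatFunc.X

lemma qq_ne_zero : (qq : K) ≠ 0 := RatFunc.X_ne_zero

lemma one_sub_pow_ne (m : ℕ) : (1 - qq ^ (m+1)) ≠ 0 := by
  have : (1 - qq ^ (m+1)) = algebraMap (Polynomial ℚ) K (1 - Polynomial.X ^ (m+1)) := by
    simp [map_sub, map_pow, RatFunc.algebraMap_X]
  rw [this, map_ne_zero_iff _ (RatFunc.algebraMap_injective ℚ)]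
  intro h
  have := congrArg (Polynomial.coeff · 0) h
  simp [Polynomial.coeff_X_pow] at this

lemma prod_ne (n : ℕ) : (∏ k ∈ Finset.range n, (1 - qq ^ (k + 1))) ≠ 0 :=
  Finset.prod_ne_zero_iff.mpr fun k _ => one_sub_pow_ne k

lemma qcoef_zero : qcoef 0 = 1 := by simp [qcoef]

lemma qcoef_ne_zero (n : ℕ) : qcoef n ≠ 0 := by
  unfold qcoef
  exact div_ne_zero (pow_ne_zero _ (by norm_num)) (prod_ne n)

lemma qcoef_succ (n : ℕ) : qcoef (n+1) * (1 - qq ^ (n+1)) = - qcoef n := by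
  unfold qcoef
  rw [Finset.prod_range_succ]
  have h1 : (1 - qq ^ (n+1)) ≠ 0 := one_sub_pow_ne n
  field_simp
  rw [pow_succ]
  ring

lemma qcoef_succ_eq (n : ℕ) : qcoef (n+1) = - qcoef n / (1 - qq ^ (n+1)) :=
  eq_div_of_mul_eq (one_sub_pow_ne n) (qcoef_succ n)

lemma qcoef_mul_q_pow (m : ℕ) : qcoef (m+1) * qq ^ (m+1) = qcoef (m+1) + qcoef m := by
  linear_combination - qcoef_succ m

set_option linter.unusedSectionVars false

section Alg
variable {A : Type*} [Ring A] [Algebra K A] [TopologicalSpace A] [T2Space A]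

/-- finite truncation of the quantum exponential -/
noncomputable def S (N : ℕ) (x : A) : A := ∑ n ∈ Finset.range N, qcoef n • x ^ n

lemma pow_le_zero {x : A} {m n : ℕ} (hx : x ^ m = 0) (h : m ≤ n) : x ^ n = 0 := by
  rw [← Nat.sub_add_cancel h, pow_add, hx, mul_zero]

lemma qexp_eq_S {x : A} {N : ℕ} (hx : x ^ N = 0) : qexp x = S N x := by
  refine tsum_eq_sum ?_
  intro n hn
  have : N ≤ n := Nat.le_of_not_lt (fun h => hn (Finset.mem_range.mpr h))
  rw [pow_le_zero hx this, smul_zero]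

lemma pow_rel {x y : A} {c : K} (h : y * x = c • (x * y)) :
    ∀ m : ℕ, y ^ m * x = (c ^ m) • (x * y ^ m) := by
  intro m
  induction m with
  | zero => simp
  | succ m ih =>
    calc y ^ (m+1) * x = y ^ m * (y * x) := by rw [pow_succ, mul_assoc]
    _ = c • (y ^ m * x * y) := by rw [h, mul_smul_comm, mul_assoc]
    _ = c • ((c ^ m) • (x * y ^ m * y)) := by rw [ih, smul_mul_assoc]
    _ = (c ^ (m+1)) • (x * y ^ (m+1)) := by
        rw [smul_smul, mul_assoc, ← pow_succ, ← pow_succ']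

end Alg


section Alg2
variable {A : Type*} [Ring A] [Algebra K A] [TopologicalSpace A] [T2Space A]

lemma qexp_mul_right {x y : A} {N : ℕ} (hy : y ^ N = 0) (h : y * x = qq • (x * y)) :
    qexp y * x = (x + x * y) * qexp y := by
  have hy1 : y ^ (N+1) = 0 := pow_le_zero hy (Nat.le_succ N)
  rw [qexp_eq_S hy1]
  unfold S
  have hxS : x * (∑ n ∈ Finset.range (N+1), qcoef n • y ^ n)
      = (∑ m ∈ Finset.range N, qcoef (m+1) • (x * y ^ (m+1))) + qcoef 0 • (x * y ^ 0) := by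
    rw [Finset.mul_sum]
    simp only [mul_smul_comm]
    exact Finset.sum_range_succ' _ N
  have hxyS : (x * y) * (∑ n ∈ Finset.range (N+1), qcoef n • y ^ n)
      = ∑ m ∈ Finset.range N, qcoef m • (x * y ^ (m+1)) := by
    rw [Finset.mul_sum]
    simp only [mul_smul_comm]
    calc ∑ n ∈ Finset.range (N+1), qcoef n • (x * y * y ^ n)
        = ∑ n ∈ Finset.range (N+1), qcoef n • (x * y ^ (n+1)) := by
          refine Finset.sum_congr rfl fun n _ => ?_
          rw [mul_assoc, ← pow_succ']
      _ = (∑ n ∈ Finset.range N, qcoef n • (x * y ^ (n+1))) + qcoef N • (x * y ^ (N+1)) :=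
          Finset.sum_range_succ _ N
      _ = ∑ n ∈ Finset.range N, qcoef n • (x * y ^ (n+1)) := by rw [hy1, mul_zero, smul_zero, add_zero]
  calc (∑ n ∈ Finset.range (N+1), qcoef n • y ^ n) * x
      = ∑ n ∈ Finset.range (N+1), (qcoef n * qq ^ n) • (x * y ^ n) := by
        rw [Finset.sum_mul]
        refine Finset.sum_congr rfl fun n _ => ?_
        rw [smul_mul_assoc, pow_rel h n, smul_smul]
    _ = (∑ m ∈ Finset.range N, (qcoef (m+1) * qq ^ (m+1)) • (x * y ^ (m+1)))
          + (qcoef 0 * qq ^ 0) • (x * y ^ 0) := Finset.sum_range_succ' _ N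
    _ = ((∑ m ∈ Finset.range N, qcoef (m+1) • (x * y ^ (m+1)))
          + ∑ m ∈ Finset.range N, qcoef m • (x * y ^ (m+1)))
          + qcoef 0 • (x * y ^ 0) := by
        rw [← Finset.sum_add_distrib]
        simp only [qcoef_mul_q_pow, add_smul, pow_zero, mul_one]
    _ = (x + x * y) * (∑ n ∈ Finset.range (N+1), qcoef n • y ^ n) := by
        rw [add_mul, hxS, hxyS]; abel

lemma qexp_mul_pow {x y : A} {N : ℕ} (hy : y ^ N = 0) (h : y * x = qq • (x * y)) (n : ℕ) :
    qexp y * x ^ n = (x + x * y) ^ n * qexp y := by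
  induction n with
  | zero => simp
  | succ n ih =>
    calc qexp y * x ^ (n+1) = (qexp y * x ^ n) * x := by rw [pow_succ, mul_assoc]
      _ = (x + x * y) ^ n * (qexp y * x) := by rw [ih, mul_assoc]
      _ = (x + x * y) ^ n * ((x + x * y) * qexp y) := by rw [qexp_mul_right hy h]
      _ = (x + x * y) ^ (n+1) * qexp y := by rw [← mul_assoc, ← pow_succ]

end Alg2


noncomputable def gb (n k : ℕ) : K := if k ≤ n then qcoef k * qcoef (n-k) / qcoef n else 0

lemma gb_zero (n : ℕ) : gb n 0 = 1 := by
  rw [gb, if_pos (Nat.zero_le n)]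
  simp [qcoef_zero, div_self (qcoef_ne_zero n)]

lemma gb_self (n : ℕ) : gb n n = 1 := by
  rw [gb, if_pos le_rfl, Nat.sub_self, qcoef_zero, mul_one, div_self (qcoef_ne_zero n)]

lemma gb_top {n k : ℕ} (h : n < k) : gb n k = 0 := by
  rw [gb, if_neg (by omega)]

lemma qcoef_mul_gb {n k : ℕ} (h : k ≤ n) : qcoef n * gb n k = qcoef k * qcoef (n-k) := by
  rw [gb, if_pos h, mul_comm, div_mul_cancel₀ _ (qcoef_ne_zero n)]

lemma gb_pascal (n k : ℕ) : gb (n+1) (k+1) = qq ^ (n-k) * gb n k + gb n (k+1) := by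
  rcases lt_trichotomy k n with hlt | rfl | hgt
  · obtain ⟨m, rfl⟩ : ∃ m, n = k + m + 1 := ⟨n - k - 1, by omega⟩
    have e1 : k + m + 1 + 1 - (k+1) = m + 1 := by omega
    have e2 : k + m + 1 - k = m + 1 := by omega
    have e3 : k + m + 1 - (k+1) = m := by omega
    rw [gb, gb, gb, if_pos (by omega), if_pos (by omega), if_pos (by omega), e1, e2, e3]
    rw [qcoef_succ_eq k, qcoef_succ_eq m,
      show qcoef (k+m+1+1) = - qcoef (k+m+1) / (1 - qq ^ (k+m+1+1)) from qcoef_succ_eq (k+m+1)]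
    have n1 : (1 - qq ^ (k+1)) ≠ 0 := one_sub_pow_ne k
    have n2 : (1 - qq ^ (m+1)) ≠ 0 := one_sub_pow_ne m
    have n3 : (1 - qq ^ (k+m+1+1)) ≠ 0 := one_sub_pow_ne (k+m+1)
    have n4 : qcoef (k+m+1) ≠ 0 := qcoef_ne_zero (k+m+1)
    have n5 : qcoef k ≠ 0 := qcoef_ne_zero k
    have n6 : qcoef m ≠ 0 := qcoef_ne_zero m
    field_simp
    ring
  · rw [gb_self, gb_self, gb_top (Nat.lt_succ_self k), Nat.sub_self, pow_zero, one_mul, add_zero]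
  · rw [gb_top (by omega), gb_top hgt, gb_top (by omega), mul_zero, add_zero]

section Alg3
variable {A : Type*} [Ring A] [Algebra K A] [TopologicalSpace A] [T2Space A]

lemma sum_shift {a b : A} (n : ℕ) :
    ∑ k ∈ Finset.range (n+1), gb n (k+1) • (a ^ (k+1) * b ^ (n-k))
      = (∑ k ∈ Finset.range (n+1), gb n k • (a ^ k * b ^ (n-k+1)))
        - gb n 0 • (a ^ 0 * b ^ (n+1)) := by
  rw [eq_sub_iff_add_eq]
  have hcongr : ∀ k ∈ Finset.range n, gb n (k+1) • (a ^ (k+1) * b ^ (n-k)) =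
      gb n (k+1) • (a ^ (k+1) * b ^ (n-(k+1)+1)) := by
    intro k hk
    have h1 : n - k = n - (k+1) + 1 := by
      have := Finset.mem_range.mp hk; omega
    rw [h1]
  calc (∑ k ∈ Finset.range (n+1), gb n (k+1) • (a ^ (k+1) * b ^ (n-k)))
        + gb n 0 • (a ^ 0 * b ^ (n+1))
      = (∑ k ∈ Finset.range n, gb n (k+1) • (a ^ (k+1) * b ^ (n-k)))
        + gb n (n+1) • (a ^ (n+1) * b ^ (n-n)) + gb n 0 • (a ^ 0 * b ^ (n+1)) := by
        rw [Finset.sum_range_succ]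
    _ = (∑ k ∈ Finset.range n, gb n (k+1) • (a ^ (k+1) * b ^ (n-(k+1)+1)))
        + gb n 0 • (a ^ 0 * b ^ (n-0+1)) := by
        rw [Finset.sum_congr rfl hcongr, gb_top (Nat.lt_succ_self n), zero_smul, add_zero,
          Nat.sub_zero]
    _ = ∑ k ∈ Finset.range (n+1), gb n k • (a ^ k * b ^ (n-k+1)) := by
        rw [Finset.sum_range_succ' (fun k => gb n k • (a ^ k * b ^ (n-k+1))) n]

lemma sum_pascal_step {a b : A} (n : ℕ) :
    ∑ k ∈ Finset.range (n+2), gb (n+1) k • (a ^ k * b ^ (n+1-k))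
      = (∑ k ∈ Finset.range (n+1), (gb n k * qq ^ (n-k)) • (a ^ (k+1) * b ^ (n-k)))
        + ∑ k ∈ Finset.range (n+1), gb n k • (a ^ k * b ^ (n-k+1)) := by
  rw [Finset.sum_range_succ' (fun k => gb (n+1) k • (a ^ k * b ^ (n+1-k))) (n+1)]
  have step : ∀ k ∈ Finset.range (n+1),
      gb (n+1) (k+1) • (a ^ (k+1) * b ^ (n+1-(k+1)))
      = (gb n k * qq ^ (n-k)) • (a ^ (k+1) * b ^ (n-k))
        + gb n (k+1) • (a ^ (k+1) * b ^ (n-k)) := by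
    intro k _
    have e0 : n + 1 - (k+1) = n - k := by omega
    rw [e0, gb_pascal n k, add_smul, mul_comm (qq ^ (n-k))]
  rw [Finset.sum_congr rfl step, Finset.sum_add_distrib, sum_shift, gb_zero,
    show gb (n+1) 0 • (a ^ 0 * b ^ (n+1-0)) = (1:K) • (a ^ 0 * b ^ (n+1)) by
      rw [gb_zero, Nat.sub_zero]]
  abel

lemma add_pow_q {a b : A} (h : b * a = qq • (a * b)) (n : ℕ) :
    (a + b) ^ n = ∑ k ∈ Finset.range (n+1), gb n k • (a ^ k * b ^ (n-k)) := by
  induction n with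
  | zero => simp [gb_zero]
  | succ n ih =>
    have term1 : ∀ k, (a ^ k * b ^ (n-k)) * a = (qq ^ (n-k)) • (a ^ (k+1) * b ^ (n-k)) := by
      intro k
      rw [mul_assoc, pow_rel h (n-k), mul_smul_comm, ← mul_assoc, ← pow_succ]
    calc (a + b) ^ (n+1) = (a + b) ^ n * (a + b) := pow_succ _ n
      _ = (∑ k ∈ Finset.range (n+1), gb n k • (a ^ k * b ^ (n-k))) * (a + b) := by rw [ih]
      _ = (∑ k ∈ Finset.range (n+1), (gb n k * qq ^ (n-k)) • (a ^ (k+1) * b ^ (n-k)))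
          + ∑ k ∈ Finset.range (n+1), gb n k • (a ^ k * b ^ (n-k+1)) := by
          have hterm : ∀ k, (gb n k • (a ^ k * b ^ (n-k))) * a
              + (gb n k • (a ^ k * b ^ (n-k))) * b
              = (gb n k * qq ^ (n-k)) • (a ^ (k+1) * b ^ (n-k))
                + gb n k • (a ^ k * b ^ (n-k+1)) := by
            intro k
            rw [smul_mul_assoc, smul_mul_assoc, term1 k, smul_smul, mul_assoc, ← pow_succ]
          rw [mul_add, Finset.sum_mul, Finset.sum_mul, ← Finset.sum_add_distrib,
            ← Finset.sum_add_distrib]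
          exact Finset.sum_congr rfl fun k _ => hterm k
      _ = ∑ k ∈ Finset.range (n+2), gb (n+1) k • (a ^ k * b ^ (n+1-k)) :=
          (sum_pascal_step n).symm

end Alg3


section Alg4
variable {A : Type*} [Ring A] [Algebra K A] [TopologicalSpace A] [T2Space A]

lemma prod_nilpotent {x y : A} {c : K} {N : ℕ} (h : y * x = c • (x * y)) (hx : x ^ N = 0) :
    (x * y) ^ N = 0 := by
  have key : ∀ n, ∃ e : K, (x * y) ^ n = e • (x ^ n * y ^ n) := by
    intro n
    induction n with
    | zero => exact ⟨1, by simp⟩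
    | succ n ih =>
      obtain ⟨e, he⟩ := ih
      refine ⟨e * c ^ n, ?_⟩
      calc (x * y) ^ (n+1) = (x * y) ^ n * (x * y) := pow_succ _ n
        _ = e • (x ^ n * y ^ n * (x * y)) := by rw [he, smul_mul_assoc]
        _ = e • (x ^ n * (y ^ n * x * y)) := by rw [mul_assoc, ← mul_assoc (y ^ n)]
        _ = e • (x ^ n * ((c ^ n • (x * y ^ n)) * y)) := by rw [pow_rel h n]
        _ = (e * c ^ n) • (x ^ n * (x * y ^ n * y)) := by
            rw [smul_mul_assoc, mul_smul_comm, smul_smul]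
        _ = (e * c ^ n) • (x ^ (n+1) * y ^ (n+1)) := by
            rw [mul_assoc x, ← pow_succ, ← mul_assoc, ← pow_succ]
  obtain ⟨e, he⟩ := key N
  rw [he, hx, zero_mul, smul_zero]

lemma add_pow_zero {a b : A} {N : ℕ} (ha : a ^ N = 0) (hb : b ^ N = 0)
    (h : b * a = qq • (a * b)) : (a + b) ^ (N + N) = 0 := by
  rw [add_pow_q h]
  refine Finset.sum_eq_zero fun k _ => ?_
  by_cases hkN : N ≤ k
  · rw [pow_le_zero ha hkN, zero_mul, smul_zero]
  · rw [pow_le_zero hb (by omega : N ≤ N + N - k), mul_zero, smul_zero]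

lemma qexp_add {a b : A} {N : ℕ} (ha : a ^ N = 0) (hb : b ^ N = 0)
    (h : b * a = qq • (a * b)) : qexp (a + b) = qexp a * qexp b := by
  have hab : (a + b) ^ (N + N) = 0 := add_pow_zero ha hb h
  have haM : a ^ (N + N) = 0 := pow_le_zero ha (by omega)
  have hbM : b ^ (N + N) = 0 := pow_le_zero hb (by omega)
  rw [qexp_eq_S hab, qexp_eq_S haM, qexp_eq_S hbM]
  unfold S
  set M := N + N with hM
  have hzero : ∀ p : ℕ × ℕ, N ≤ p.1 ∨ N ≤ p.2 →
      (qcoef p.1 * qcoef p.2) • (a ^ p.1 * b ^ p.2) = 0 := by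
    rintro ⟨u, v⟩ (hu | hv)
    · rw [pow_le_zero ha hu, zero_mul, smul_zero]
    · rw [pow_le_zero hb hv, mul_zero, smul_zero]
  calc ∑ n ∈ Finset.range M, qcoef n • (a + b) ^ n
      = ∑ n ∈ Finset.range M, ∑ k ∈ Finset.range (n+1),
          (qcoef k * qcoef (n-k)) • (a ^ k * b ^ (n-k)) := by
        refine Finset.sum_congr rfl fun n _ => ?_
        rw [add_pow_q h n, Finset.smul_sum]
        refine Finset.sum_congr rfl fun k hk => ?_
        rw [smul_smul, qcoef_mul_gb (Nat.lt_succ_iff.mp (Finset.mem_range.mp hk))]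
    _ = ∑ p ∈ (Finset.range M ×ˢ Finset.range M).filter (fun p => p.1 + p.2 < M),
          (qcoef p.1 * qcoef p.2) • (a ^ p.1 * b ^ p.2) := by
        rw [Finset.sum_sigma']
        refine Finset.sum_nbij' (fun x => (x.2, x.1 - x.2)) (fun p => ⟨p.1 + p.2, p.1⟩)
          ?_ ?_ ?_ ?_ ?_
        · rintro ⟨n, k⟩ hnk
          simp only [Finset.mem_sigma, Finset.mem_range] at hnk
          simp only [Finset.mem_filter, Finset.mem_product, Finset.mem_range]
          omega
        · rintro ⟨u, v⟩ hp
          simp only [Finset.mem_filter, Finset.mem_product, Finset.mem_range] at hp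
          simp only [Finset.mem_sigma, Finset.mem_range]
          omega
        · rintro ⟨n, k⟩ hnk
          simp only [Finset.mem_sigma, Finset.mem_range] at hnk
          simp only [Sigma.mk.inj_iff]
          constructor
          · omega
          · exact heq_of_eq rfl
        · rintro ⟨u, v⟩ _
          show (u, u + v - u) = (u, v)
          rw [Nat.add_sub_cancel_left]
        · rintro ⟨n, k⟩ hnk
          simp only [Finset.mem_sigma, Finset.mem_range] at hnk
          rfl
    _ = ∑ p ∈ Finset.range M ×ˢ Finset.range M,
          (qcoef p.1 * qcoef p.2) • (a ^ p.1 * b ^ p.2) := by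
        refine Finset.sum_subset (Finset.filter_subset _ _) ?_
        rintro ⟨u, v⟩ hp hnp
        simp only [Finset.mem_filter, Finset.mem_product, Finset.mem_range] at hp hnp
        exact hzero (u, v) (by omega)
    _ = (∑ n ∈ Finset.range M, qcoef n • a ^ n) * ∑ n ∈ Finset.range M, qcoef n • b ^ n := by
        rw [Finset.sum_mul_sum]
        rw [Finset.sum_product]
        refine Finset.sum_congr rfl fun u _ => ?_
        refine Finset.sum_congr rfl fun v _ => ?_
        rw [smul_mul_assoc, mul_smul_comm, smul_smul]

lemma qexp_conj {x y : A} {N : ℕ} (hx : x ^ N = 0) (hy : y ^ N = 0)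
    (h : y * x = qq • (x * y)) : qexp y * qexp x = qexp (x + x * y) * qexp y := by
  have hxy : (x * y) ^ N = 0 := prod_nilpotent h hx
  have hrel2 : (x * y) * x = qq • (x * (x * y)) := by
    rw [mul_assoc, h, mul_smul_comm]
  have hsum : (x + x * y) ^ (N + N) = 0 := add_pow_zero hx hxy hrel2
  have hxM : x ^ (N + N) = 0 := pow_le_zero hx (by omega)
  rw [qexp_eq_S hxM, qexp_eq_S hsum]
  unfold S
  rw [Finset.mul_sum, Finset.sum_mul]
  refine Finset.sum_congr rfl fun n _ => ?_
  rw [mul_smul_comm, smul_mul_assoc, qexp_mul_pow hy h n]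

lemma pentagon {x y : A} {N : ℕ} (hx : x ^ N = 0) (hy : y ^ N = 0)
    (h : y * x = qq • (x * y)) :
    qexp y * qexp x = qexp x * (qexp (x * y) * qexp y) := by
  have hxy : (x * y) ^ N = 0 := prod_nilpotent h hx
  have hrel2 : (x * y) * x = qq • (x * (x * y)) := by
    rw [mul_assoc, h, mul_smul_comm]
  rw [qexp_conj hx hy h, qexp_add hx hxy hrel2, mul_assoc]

lemma qexp_comm {x y : A} {N : ℕ} (hx : x ^ N = 0) (hy : y ^ N = 0) (h : x * y = y * x) :
    qexp x * qexp y = qexp y * qexp x := by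
  rw [qexp_eq_S hx, qexp_eq_S hy]
  unfold S
  rw [Finset.sum_mul_sum, Finset.sum_mul_sum, Finset.sum_comm]
  refine Finset.sum_congr rfl fun u _ => ?_
  refine Finset.sum_congr rfl fun v _ => ?_
  rw [smul_mul_assoc, mul_smul_comm, smul_mul_assoc, mul_smul_comm, smul_smul, smul_smul,
    mul_comm (qcoef v) (qcoef u), (Commute.pow_pow h v u).eq]

end Alg4


section Alg5
variable {A : Type*} [Ring A] [Algebra K A] [TopologicalSpace A] [T2Space A]

lemma rel_comp_right {z x y : A} {m n p : ℤ} (hp : m + n = p)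
    (h1 : z * x = (qq ^ m) • (x * z)) (h2 : z * y = (qq ^ n) • (y * z)) :
    z * (x * y) = (qq ^ p) • ((x * y) * z) := by
  calc z * (x * y) = (z * x) * y := (mul_assoc _ _ _).symm
    _ = (qq ^ m) • (x * (z * y)) := by rw [h1, smul_mul_assoc, mul_assoc]
    _ = (qq ^ m * qq ^ n) • (x * (y * z)) := by rw [h2, mul_smul_comm, smul_smul]
    _ = (qq ^ p) • ((x * y) * z) := by rw [← zpow_add₀ qq_ne_zero, hp, mul_assoc]

lemma rel_comp_left {x y z : A} {m n p : ℤ} (hp : m + n = p)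
    (h1 : x * z = (qq ^ m) • (z * x)) (h2 : y * z = (qq ^ n) • (z * y)) :
    (x * y) * z = (qq ^ p) • (z * (x * y)) := by
  calc (x * y) * z = x * (y * z) := mul_assoc _ _ _
    _ = (qq ^ n) • ((x * z) * y) := by rw [h2, mul_smul_comm, mul_assoc]
    _ = (qq ^ n * qq ^ m) • ((z * x) * y) := by rw [h1, smul_mul_assoc, smul_smul]
    _ = (qq ^ p) • (z * (x * y)) := by
        rw [← zpow_add₀ qq_ne_zero, add_comm n m, hp, mul_assoc]

lemma rel_to_comm {x y : A} (h : x * y = (qq ^ (0:ℤ)) • (y * x)) : x * y = y * x := by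
  rwa [zpow_zero, one_smul] at h

lemma rel_to_q {x y : A} (h : x * y = (qq ^ (1:ℤ)) • (y * x)) : x * y = qq • (y * x) := by
  rwa [zpow_one] at h

lemma swap_t {x y : A} {N : ℕ} (hx : x ^ N = 0) (hy : y ^ N = 0) (h : x * y = y * x)
    (t : A) : qexp x * (qexp y * t) = qexp y * (qexp x * t) := by
  rw [← mul_assoc, qexp_comm hx hy h, mul_assoc]

lemma pent_t {x y w : A} {N : ℕ} (hx : x ^ N = 0) (hy : y ^ N = 0)
    (h : y * x = qq • (x * y)) (hw : w = x * y) (t : A) :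
    qexp y * (qexp x * t) = qexp x * (qexp w * (qexp y * t)) := by
  rw [hw, ← mul_assoc, pentagon hx hy h, mul_assoc, mul_assoc]

lemma pent_last {x y w : A} {N : ℕ} (hx : x ^ N = 0) (hy : y ^ N = 0)
    (h : y * x = qq • (x * y)) (hw : w = x * y) :
    qexp y * qexp x = qexp x * (qexp w * qexp y) := by
  rw [hw]; exact pentagon hx hy h

end Alg5

/-- The ten-term cyclic quantum dilogarithm identity `T₄ = ρ(T₄)` for generators
`Z_{ij}` of the quantum torus `T_4` of the quiver `Q_4` (here realized by nilpotent
`q`-commuting elements of a topological algebra). -/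
theorem ten_term_cyclic_identity {A : Type*} [Ring A] [Algebra (RatFunc ℚ) A]
    [TopologicalSpace A] [T2Space A] (Z : ℕ × ℕ → A)
    (hrel : ∀ v ∈ vertexSet 4, ∀ w ∈ vertexSet 4,
      Z v * Z w = ((RatFunc.X : RatFunc ℚ) ^ (Bfun v w)) • (Z w * Z v))
    (hnil : ∀ v ∈ vertexSet 4, IsNilpotent (Z v)) :
    qexp (Z (1,2)) * qexp (Z (1,2) * Z (2,3)) * qexp (Z (1,2) * Z (2,3) * Z (3,4)) *
      qexp (Z (1,3)) * qexp (Z (1,3) * Z (2,4)) * qexp (Z (1,4)) * qexp (Z (2,3)) *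
      qexp (Z (2,3) * Z (3,4)) * qexp (Z (2,4)) * qexp (Z (3,4)) =
    qexp (Z (1,4)) * qexp (Z (1,4) * Z (1,3)) * qexp (Z (1,4) * Z (1,3) * Z (1,2)) *
      qexp (Z (2,4)) * qexp (Z (2,4) * Z (2,3)) * qexp (Z (3,4)) * qexp (Z (1,3)) *
      qexp (Z (1,3) * Z (1,2)) * qexp (Z (2,3)) * qexp (Z (1,2)) := by
  obtain ⟨n12, h12⟩ := hnil (1,2) (by decide)
  obtain ⟨n13, h13⟩ := hnil (1,3) (by decide)
  obtain ⟨n14, h14⟩ := hnil (1,4) (by decide)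
  obtain ⟨n23, h23⟩ := hnil (2,3) (by decide)
  obtain ⟨n24, h24⟩ := hnil (2,4) (by decide)
  obtain ⟨n34, h34⟩ := hnil (3,4) (by decide)
  set N := n12 + n13 + n14 + n23 + n24 + n34 with hN
  have hZ12 : Z (1,2) ^ N = 0 := pow_le_zero h12 (by omega)
  have hZ13 : Z (1,3) ^ N = 0 := pow_le_zero h13 (by omega)
  have hZ14 : Z (1,4) ^ N = 0 := pow_le_zero h14 (by omega)
  have hZ23 : Z (2,3) ^ N = 0 := pow_le_zero h23 (by omega)
  have hZ24 : Z (2,4) ^ N = 0 := pow_le_zero h24 (by omega)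
  have hZ34 : Z (3,4) ^ N = 0 := pow_le_zero h34 (by omega)
  have rel_12__13 : Z (1,2) * Z (1,3) = (qq ^ (1 : ℤ)) • (Z (1,3) * Z (1,2)) := by
    have h := hrel (1,2) (by decide) (1,3) (by decide)
    rwa [show Bfun (1,2) (1,3) = (1 : ℤ) from by decide] at h
  have rel_23__13 : Z (2,3) * Z (1,3) = (qq ^ (-1 : ℤ)) • (Z (1,3) * Z (2,3)) := by
    have h := hrel (2,3) (by decide) (1,3) (by decide)
    rwa [show Bfun (2,3) (1,3) = (-1 : ℤ) from by decide] at h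
  have rel_34__13 : Z (3,4) * Z (1,3) = (qq ^ (0 : ℤ)) • (Z (1,3) * Z (3,4)) := by
    have h := hrel (3,4) (by decide) (1,3) (by decide)
    rwa [show Bfun (3,4) (1,3) = (0 : ℤ) from by decide] at h
  have rel_23_34__13 : (Z (2,3) * Z (3,4)) * Z (1,3) = (qq ^ (-1 : ℤ)) • (Z (1,3) * (Z (2,3) * Z (3,4))) := rel_comp_left (by norm_num : (-1:ℤ) + (0:ℤ) = -1) rel_23__13 rel_34__13
  have rel_12_23_34__13 : (Z (1,2) * (Z (2,3) * Z (3,4))) * Z (1,3) = (qq ^ (0 : ℤ)) • (Z (1,3) * (Z (1,2) * (Z (2,3) * Z (3,4)))) := rel_comp_left (by norm_num : (1:ℤ) + (-1:ℤ) = 0) rel_12__13 rel_23_34__13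
  have eq_12_23_34__13 : (Z (1,2) * (Z (2,3) * Z (3,4))) * Z (1,3) = Z (1,3) * (Z (1,2) * (Z (2,3) * Z (3,4))) := rel_to_comm rel_12_23_34__13
  have rel_34__23 : Z (3,4) * Z (2,3) = (qq ^ (1 : ℤ)) • (Z (2,3) * Z (3,4)) := by
    have h := hrel (3,4) (by decide) (2,3) (by decide)
    rwa [show Bfun (3,4) (2,3) = (1 : ℤ) from by decide] at h
  have nil_23_34 : (Z (2,3) * Z (3,4)) ^ N = 0 := prod_nilpotent rel_34__23 hZ23
  have rel_23__12 : Z (2,3) * Z (1,2) = (qq ^ (1 : ℤ)) • (Z (1,2) * Z (2,3)) := by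
    have h := hrel (2,3) (by decide) (1,2) (by decide)
    rwa [show Bfun (2,3) (1,2) = (1 : ℤ) from by decide] at h
  have rel_34__12 : Z (3,4) * Z (1,2) = (qq ^ (0 : ℤ)) • (Z (1,2) * Z (3,4)) := by
    have h := hrel (3,4) (by decide) (1,2) (by decide)
    rwa [show Bfun (3,4) (1,2) = (0 : ℤ) from by decide] at h
  have rel_23_34__12 : (Z (2,3) * Z (3,4)) * Z (1,2) = (qq ^ (1 : ℤ)) • (Z (1,2) * (Z (2,3) * Z (3,4))) := rel_comp_left (by norm_num : (1:ℤ) + (0:ℤ) = 1) rel_23__12 rel_34__12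
  have nil_12_23_34 : (Z (1,2) * (Z (2,3) * Z (3,4))) ^ N = 0 := prod_nilpotent rel_23_34__12 hZ12
  have s1 : ∀ t : A, qexp (Z (1,2) * (Z (2,3) * Z (3,4))) * (qexp (Z (1,3)) * t) = qexp (Z (1,3)) * (qexp (Z (1,2) * (Z (2,3) * Z (3,4))) * t) := swap_t nil_12_23_34 hZ13 eq_12_23_34__13
  have rel_12__24 : Z (1,2) * Z (2,4) = (qq ^ (0 : ℤ)) • (Z (2,4) * Z (1,2)) := by
    have h := hrel (1,2) (by decide) (2,4) (by decide)
    rwa [show Bfun (1,2) (2,4) = (0 : ℤ) from by decide] at h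
  have rel_12__13_24 : Z (1,2) * (Z (1,3) * Z (2,4)) = (qq ^ (1 : ℤ)) • ((Z (1,3) * Z (2,4)) * Z (1,2)) := rel_comp_right (by norm_num : (1:ℤ) + (0:ℤ) = 1) rel_12__13 rel_12__24
  have rel_23__24 : Z (2,3) * Z (2,4) = (qq ^ (1 : ℤ)) • (Z (2,4) * Z (2,3)) := by
    have h := hrel (2,3) (by decide) (2,4) (by decide)
    rwa [show Bfun (2,3) (2,4) = (1 : ℤ) from by decide] at h
  have rel_23__13_24 : Z (2,3) * (Z (1,3) * Z (2,4)) = (qq ^ (0 : ℤ)) • ((Z (1,3) * Z (2,4)) * Z (2,3)) := rel_comp_right (by norm_num : (-1:ℤ) + (1:ℤ) = 0) rel_23__13 rel_23__24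
  have rel_34__24 : Z (3,4) * Z (2,4) = (qq ^ (-1 : ℤ)) • (Z (2,4) * Z (3,4)) := by
    have h := hrel (3,4) (by decide) (2,4) (by decide)
    rwa [show Bfun (3,4) (2,4) = (-1 : ℤ) from by decide] at h
  have rel_34__13_24 : Z (3,4) * (Z (1,3) * Z (2,4)) = (qq ^ (-1 : ℤ)) • ((Z (1,3) * Z (2,4)) * Z (3,4)) := rel_comp_right (by norm_num : (0:ℤ) + (-1:ℤ) = -1) rel_34__13 rel_34__24
  have rel_23_34__13_24 : (Z (2,3) * Z (3,4)) * (Z (1,3) * Z (2,4)) = (qq ^ (-1 : ℤ)) • ((Z (1,3) * Z (2,4)) * (Z (2,3) * Z (3,4))) := rel_comp_left (by norm_num : (0:ℤ) + (-1:ℤ) = -1) rel_23__13_24 rel_34__13_24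
  have rel_12_23_34__13_24 : (Z (1,2) * (Z (2,3) * Z (3,4))) * (Z (1,3) * Z (2,4)) = (qq ^ (0 : ℤ)) • ((Z (1,3) * Z (2,4)) * (Z (1,2) * (Z (2,3) * Z (3,4)))) := rel_comp_left (by norm_num : (1:ℤ) + (-1:ℤ) = 0) rel_12__13_24 rel_23_34__13_24
  have eq_12_23_34__13_24 : (Z (1,2) * (Z (2,3) * Z (3,4))) * (Z (1,3) * Z (2,4)) = (Z (1,3) * Z (2,4)) * (Z (1,2) * (Z (2,3) * Z (3,4))) := rel_to_comm rel_12_23_34__13_24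
  have rel_24__13 : Z (2,4) * Z (1,3) = (qq ^ (1 : ℤ)) • (Z (1,3) * Z (2,4)) := by
    have h := hrel (2,4) (by decide) (1,3) (by decide)
    rwa [show Bfun (2,4) (1,3) = (1 : ℤ) from by decide] at h
  have nil_13_24 : (Z (1,3) * Z (2,4)) ^ N = 0 := prod_nilpotent rel_24__13 hZ13
  have s2 : ∀ t : A, qexp (Z (1,2) * (Z (2,3) * Z (3,4))) * (qexp (Z (1,3) * Z (2,4)) * t) = qexp (Z (1,3) * Z (2,4)) * (qexp (Z (1,2) * (Z (2,3) * Z (3,4))) * t) := swap_t nil_12_23_34 nil_13_24 eq_12_23_34__13_24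
  have rel_12__14 : Z (1,2) * Z (1,4) = (qq ^ (0 : ℤ)) • (Z (1,4) * Z (1,2)) := by
    have h := hrel (1,2) (by decide) (1,4) (by decide)
    rwa [show Bfun (1,2) (1,4) = (0 : ℤ) from by decide] at h
  have rel_23__14 : Z (2,3) * Z (1,4) = (qq ^ (0 : ℤ)) • (Z (1,4) * Z (2,3)) := by
    have h := hrel (2,3) (by decide) (1,4) (by decide)
    rwa [show Bfun (2,3) (1,4) = (0 : ℤ) from by decide] at h
  have rel_34__14 : Z (3,4) * Z (1,4) = (qq ^ (0 : ℤ)) • (Z (1,4) * Z (3,4)) := by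
    have h := hrel (3,4) (by decide) (1,4) (by decide)
    rwa [show Bfun (3,4) (1,4) = (0 : ℤ) from by decide] at h
  have rel_23_34__14 : (Z (2,3) * Z (3,4)) * Z (1,4) = (qq ^ (0 : ℤ)) • (Z (1,4) * (Z (2,3) * Z (3,4))) := rel_comp_left (by norm_num : (0:ℤ) + (0:ℤ) = 0) rel_23__14 rel_34__14
  have rel_12_23_34__14 : (Z (1,2) * (Z (2,3) * Z (3,4))) * Z (1,4) = (qq ^ (0 : ℤ)) • (Z (1,4) * (Z (1,2) * (Z (2,3) * Z (3,4)))) := rel_comp_left (by norm_num : (0:ℤ) + (0:ℤ) = 0) rel_12__14 rel_23_34__14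
  have eq_12_23_34__14 : (Z (1,2) * (Z (2,3) * Z (3,4))) * Z (1,4) = Z (1,4) * (Z (1,2) * (Z (2,3) * Z (3,4))) := rel_to_comm rel_12_23_34__14
  have s3 : ∀ t : A, qexp (Z (1,2) * (Z (2,3) * Z (3,4))) * (qexp (Z (1,4)) * t) = qexp (Z (1,4)) * (qexp (Z (1,2) * (Z (2,3) * Z (3,4))) * t) := swap_t nil_12_23_34 hZ14 eq_12_23_34__14
  have rel_13__14 : Z (1,3) * Z (1,4) = (qq ^ (1 : ℤ)) • (Z (1,4) * Z (1,3)) := by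
    have h := hrel (1,3) (by decide) (1,4) (by decide)
    rwa [show Bfun (1,3) (1,4) = (1 : ℤ) from by decide] at h
  have rel_24__14 : Z (2,4) * Z (1,4) = (qq ^ (-1 : ℤ)) • (Z (1,4) * Z (2,4)) := by
    have h := hrel (2,4) (by decide) (1,4) (by decide)
    rwa [show Bfun (2,4) (1,4) = (-1 : ℤ) from by decide] at h
  have rel_13_24__14 : (Z (1,3) * Z (2,4)) * Z (1,4) = (qq ^ (0 : ℤ)) • (Z (1,4) * (Z (1,3) * Z (2,4))) := rel_comp_left (by norm_num : (1:ℤ) + (-1:ℤ) = 0) rel_13__14 rel_24__14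
  have eq_13_24__14 : (Z (1,3) * Z (2,4)) * Z (1,4) = Z (1,4) * (Z (1,3) * Z (2,4)) := rel_to_comm rel_13_24__14
  have s4 : ∀ t : A, qexp (Z (1,3) * Z (2,4)) * (qexp (Z (1,4)) * t) = qexp (Z (1,4)) * (qexp (Z (1,3) * Z (2,4)) * t) := swap_t nil_13_24 hZ14 eq_13_24__14
  have hq_13__14 : Z (1,3) * Z (1,4) = qq • (Z (1,4) * Z (1,3)) := rel_to_q rel_13__14
  have nil_14_13 : (Z (1,4) * Z (1,3)) ^ N = 0 := prod_nilpotent rel_13__14 hZ14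
  have s5 : ∀ t : A, qexp (Z (1,3)) * (qexp (Z (1,4)) * t) = qexp (Z (1,4)) * (qexp (Z (1,4) * Z (1,3)) * (qexp (Z (1,3)) * t)) := pent_t hZ14 hZ13 hq_13__14 rfl
  have rel_12_23__14 : (Z (1,2) * Z (2,3)) * Z (1,4) = (qq ^ (0 : ℤ)) • (Z (1,4) * (Z (1,2) * Z (2,3))) := rel_comp_left (by norm_num : (0:ℤ) + (0:ℤ) = 0) rel_12__14 rel_23__14
  have eq_12_23__14 : (Z (1,2) * Z (2,3)) * Z (1,4) = Z (1,4) * (Z (1,2) * Z (2,3)) := rel_to_comm rel_12_23__14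
  have nil_12_23 : (Z (1,2) * Z (2,3)) ^ N = 0 := prod_nilpotent rel_23__12 hZ12
  have s6 : ∀ t : A, qexp (Z (1,2) * Z (2,3)) * (qexp (Z (1,4)) * t) = qexp (Z (1,4)) * (qexp (Z (1,2) * Z (2,3)) * t) := swap_t nil_12_23 hZ14 eq_12_23__14
  have eq_12__14 : Z (1,2) * Z (1,4) = Z (1,4) * Z (1,2) := rel_to_comm rel_12__14
  have s7 : ∀ t : A, qexp (Z (1,2)) * (qexp (Z (1,4)) * t) = qexp (Z (1,4)) * (qexp (Z (1,2)) * t) := swap_t hZ12 hZ14 eq_12__14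
  have rel_12__14_13 : Z (1,2) * (Z (1,4) * Z (1,3)) = (qq ^ (1 : ℤ)) • ((Z (1,4) * Z (1,3)) * Z (1,2)) := rel_comp_right (by norm_num : (0:ℤ) + (1:ℤ) = 1) rel_12__14 rel_12__13
  have rel_23__14_13 : Z (2,3) * (Z (1,4) * Z (1,3)) = (qq ^ (-1 : ℤ)) • ((Z (1,4) * Z (1,3)) * Z (2,3)) := rel_comp_right (by norm_num : (0:ℤ) + (-1:ℤ) = -1) rel_23__14 rel_23__13
  have rel_12_23__14_13 : (Z (1,2) * Z (2,3)) * (Z (1,4) * Z (1,3)) = (qq ^ (0 : ℤ)) • ((Z (1,4) * Z (1,3)) * (Z (1,2) * Z (2,3))) := rel_comp_left (by norm_num : (1:ℤ) + (-1:ℤ) = 0) rel_12__14_13 rel_23__14_13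
  have eq_12_23__14_13 : (Z (1,2) * Z (2,3)) * (Z (1,4) * Z (1,3)) = (Z (1,4) * Z (1,3)) * (Z (1,2) * Z (2,3)) := rel_to_comm rel_12_23__14_13
  have s8 : ∀ t : A, qexp (Z (1,2) * Z (2,3)) * (qexp (Z (1,4) * Z (1,3)) * t) = qexp (Z (1,4) * Z (1,3)) * (qexp (Z (1,2) * Z (2,3)) * t) := swap_t nil_12_23 nil_14_13 eq_12_23__14_13
  have rel_12__23 : Z (1,2) * Z (2,3) = (qq ^ (-1 : ℤ)) • (Z (2,3) * Z (1,2)) := by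
    have h := hrel (1,2) (by decide) (2,3) (by decide)
    rwa [show Bfun (1,2) (2,3) = (-1 : ℤ) from by decide] at h
  have rel_23__23 : Z (2,3) * Z (2,3) = (qq ^ (0 : ℤ)) • (Z (2,3) * Z (2,3)) := by
    have h := hrel (2,3) (by decide) (2,3) (by decide)
    rwa [show Bfun (2,3) (2,3) = (0 : ℤ) from by decide] at h
  have rel_23_34__23 : (Z (2,3) * Z (3,4)) * Z (2,3) = (qq ^ (1 : ℤ)) • (Z (2,3) * (Z (2,3) * Z (3,4))) := rel_comp_left (by norm_num : (0:ℤ) + (1:ℤ) = 1) rel_23__23 rel_34__23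
  have rel_12_23_34__23 : (Z (1,2) * (Z (2,3) * Z (3,4))) * Z (2,3) = (qq ^ (0 : ℤ)) • (Z (2,3) * (Z (1,2) * (Z (2,3) * Z (3,4)))) := rel_comp_left (by norm_num : (-1:ℤ) + (1:ℤ) = 0) rel_12__23 rel_23_34__23
  have eq_12_23_34__23 : (Z (1,2) * (Z (2,3) * Z (3,4))) * Z (2,3) = Z (2,3) * (Z (1,2) * (Z (2,3) * Z (3,4))) := rel_to_comm rel_12_23_34__23
  have s9 : ∀ t : A, qexp (Z (1,2) * (Z (2,3) * Z (3,4))) * (qexp (Z (2,3)) * t) = qexp (Z (2,3)) * (qexp (Z (1,2) * (Z (2,3) * Z (3,4))) * t) := swap_t nil_12_23_34 hZ23 eq_12_23_34__23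
  have rel_13__23 : Z (1,3) * Z (2,3) = (qq ^ (1 : ℤ)) • (Z (2,3) * Z (1,3)) := by
    have h := hrel (1,3) (by decide) (2,3) (by decide)
    rwa [show Bfun (1,3) (2,3) = (1 : ℤ) from by decide] at h
  have rel_24__23 : Z (2,4) * Z (2,3) = (qq ^ (-1 : ℤ)) • (Z (2,3) * Z (2,4)) := by
    have h := hrel (2,4) (by decide) (2,3) (by decide)
    rwa [show Bfun (2,4) (2,3) = (-1 : ℤ) from by decide] at h
  have rel_13_24__23 : (Z (1,3) * Z (2,4)) * Z (2,3) = (qq ^ (0 : ℤ)) • (Z (2,3) * (Z (1,3) * Z (2,4))) := rel_comp_left (by norm_num : (1:ℤ) + (-1:ℤ) = 0) rel_13__23 rel_24__23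
  have eq_13_24__23 : (Z (1,3) * Z (2,4)) * Z (2,3) = Z (2,3) * (Z (1,3) * Z (2,4)) := rel_to_comm rel_13_24__23
  have s10 : ∀ t : A, qexp (Z (1,3) * Z (2,4)) * (qexp (Z (2,3)) * t) = qexp (Z (2,3)) * (qexp (Z (1,3) * Z (2,4)) * t) := swap_t nil_13_24 hZ23 eq_13_24__23
  have hq_13__23 : Z (1,3) * Z (2,3) = qq • (Z (2,3) * Z (1,3)) := rel_to_q rel_13__23
  have nil_23_13 : (Z (2,3) * Z (1,3)) ^ N = 0 := prod_nilpotent rel_13__23 hZ23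
  have s11 : ∀ t : A, qexp (Z (1,3)) * (qexp (Z (2,3)) * t) = qexp (Z (2,3)) * (qexp (Z (2,3) * Z (1,3)) * (qexp (Z (1,3)) * t)) := pent_t hZ23 hZ13 hq_13__23 rfl
  have rel_23_34__24 : (Z (2,3) * Z (3,4)) * Z (2,4) = (qq ^ (0 : ℤ)) • (Z (2,4) * (Z (2,3) * Z (3,4))) := rel_comp_left (by norm_num : (1:ℤ) + (-1:ℤ) = 0) rel_23__24 rel_34__24
  have eq_23_34__24 : (Z (2,3) * Z (3,4)) * Z (2,4) = Z (2,4) * (Z (2,3) * Z (3,4)) := rel_to_comm rel_23_34__24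
  have s12 : ∀ t : A, qexp (Z (2,3) * Z (3,4)) * (qexp (Z (2,4)) * t) = qexp (Z (2,4)) * (qexp (Z (2,3) * Z (3,4)) * t) := swap_t nil_23_34 hZ24 eq_23_34__24
  have rel_12_23_34__24 : (Z (1,2) * (Z (2,3) * Z (3,4))) * Z (2,4) = (qq ^ (0 : ℤ)) • (Z (2,4) * (Z (1,2) * (Z (2,3) * Z (3,4)))) := rel_comp_left (by norm_num : (0:ℤ) + (0:ℤ) = 0) rel_12__24 rel_23_34__24
  have eq_12_23_34__24 : (Z (1,2) * (Z (2,3) * Z (3,4))) * Z (2,4) = Z (2,4) * (Z (1,2) * (Z (2,3) * Z (3,4))) := rel_to_comm rel_12_23_34__24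
  have s13 : ∀ t : A, qexp (Z (1,2) * (Z (2,3) * Z (3,4))) * (qexp (Z (2,4)) * t) = qexp (Z (2,4)) * (qexp (Z (1,2) * (Z (2,3) * Z (3,4))) * t) := swap_t nil_12_23_34 hZ24 eq_12_23_34__24
  have hq_24__13 : Z (2,4) * Z (1,3) = qq • (Z (1,3) * Z (2,4)) := rel_to_q rel_24__13
  have s14 : ∀ t : A, qexp (Z (2,4)) * (qexp (Z (1,3)) * t) = qexp (Z (1,3)) * (qexp (Z (1,3) * Z (2,4)) * (qexp (Z (2,4)) * t)) := pent_t hZ13 hZ24 hq_24__13 rfl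
  have hq_12__14_13 : Z (1,2) * (Z (1,4) * Z (1,3)) = qq • ((Z (1,4) * Z (1,3)) * Z (1,2)) := rel_to_q rel_12__14_13
  have nil_13_12 : (Z (1,3) * Z (1,2)) ^ N = 0 := prod_nilpotent rel_12__13 hZ13
  have rel_13_12__14 : (Z (1,3) * Z (1,2)) * Z (1,4) = (qq ^ (1 : ℤ)) • (Z (1,4) * (Z (1,3) * Z (1,2))) := rel_comp_left (by norm_num : (1:ℤ) + (0:ℤ) = 1) rel_13__14 rel_12__14
  have nil_14_13_12 : (Z (1,4) * (Z (1,3) * Z (1,2))) ^ N = 0 := prod_nilpotent rel_13_12__14 hZ14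
  have s15 : ∀ t : A, qexp (Z (1,2)) * (qexp (Z (1,4) * Z (1,3)) * t) = qexp (Z (1,4) * Z (1,3)) * (qexp (Z (1,4) * (Z (1,3) * Z (1,2))) * (qexp (Z (1,2)) * t)) := pent_t nil_14_13 hZ12 hq_12__14_13 (by simp only [mul_assoc])
  have rel_13__24 : Z (1,3) * Z (2,4) = (qq ^ (-1 : ℤ)) • (Z (2,4) * Z (1,3)) := by
    have h := hrel (1,3) (by decide) (2,4) (by decide)
    rwa [show Bfun (1,3) (2,4) = (-1 : ℤ) from by decide] at h
  have rel_23_13__24 : (Z (2,3) * Z (1,3)) * Z (2,4) = (qq ^ (0 : ℤ)) • (Z (2,4) * (Z (2,3) * Z (1,3))) := rel_comp_left (by norm_num : (1:ℤ) + (-1:ℤ) = 0) rel_23__24 rel_13__24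
  have eq_23_13__24 : (Z (2,3) * Z (1,3)) * Z (2,4) = Z (2,4) * (Z (2,3) * Z (1,3)) := rel_to_comm rel_23_13__24
  have s16 : ∀ t : A, qexp (Z (2,3) * Z (1,3)) * (qexp (Z (2,4)) * t) = qexp (Z (2,4)) * (qexp (Z (2,3) * Z (1,3)) * t) := swap_t nil_23_13 hZ24 eq_23_13__24
  have hq_23__12 : Z (2,3) * Z (1,2) = qq • (Z (1,2) * Z (2,3)) := rel_to_q rel_23__12
  have s17 : ∀ t : A, qexp (Z (2,3)) * (qexp (Z (1,2)) * t) = qexp (Z (1,2)) * (qexp (Z (1,2) * Z (2,3)) * (qexp (Z (2,3)) * t)) := pent_t hZ12 hZ23 hq_23__12 rfl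
  have eq_12__24 : Z (1,2) * Z (2,4) = Z (2,4) * Z (1,2) := rel_to_comm rel_12__24
  have s18 : ∀ t : A, qexp (Z (1,2)) * (qexp (Z (2,4)) * t) = qexp (Z (2,4)) * (qexp (Z (1,2)) * t) := swap_t hZ12 hZ24 eq_12__24
  have rel_12__23_13 : Z (1,2) * (Z (2,3) * Z (1,3)) = (qq ^ (0 : ℤ)) • ((Z (2,3) * Z (1,3)) * Z (1,2)) := rel_comp_right (by norm_num : (-1:ℤ) + (1:ℤ) = 0) rel_12__23 rel_12__13
  have eq_12__23_13 : Z (1,2) * (Z (2,3) * Z (1,3)) = (Z (2,3) * Z (1,3)) * Z (1,2) := rel_to_comm rel_12__23_13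
  have s19 : ∀ t : A, qexp (Z (1,2)) * (qexp (Z (2,3) * Z (1,3)) * t) = qexp (Z (2,3) * Z (1,3)) * (qexp (Z (1,2)) * t) := swap_t hZ12 nil_23_13 eq_12__23_13
  have hq_12__13 : Z (1,2) * Z (1,3) = qq • (Z (1,3) * Z (1,2)) := rel_to_q rel_12__13
  have s20 : ∀ t : A, qexp (Z (1,2)) * (qexp (Z (1,3)) * t) = qexp (Z (1,3)) * (qexp (Z (1,3) * Z (1,2)) * (qexp (Z (1,2)) * t)) := pent_t hZ13 hZ12 hq_12__13 rfl
  have hq_23_34__12 : (Z (2,3) * Z (3,4)) * Z (1,2) = qq • (Z (1,2) * (Z (2,3) * Z (3,4))) := rel_to_q rel_23_34__12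
  have s21 : ∀ t : A, qexp (Z (2,3) * Z (3,4)) * (qexp (Z (1,2)) * t) = qexp (Z (1,2)) * (qexp (Z (1,2) * (Z (2,3) * Z (3,4))) * (qexp (Z (2,3) * Z (3,4)) * t)) := pent_t hZ12 nil_23_34 hq_23_34__12 rfl
  have hq_23__24 : Z (2,3) * Z (2,4) = qq • (Z (2,4) * Z (2,3)) := rel_to_q rel_23__24
  have nil_24_23 : (Z (2,4) * Z (2,3)) ^ N = 0 := prod_nilpotent rel_23__24 hZ24
  have s22 : ∀ t : A, qexp (Z (2,3)) * (qexp (Z (2,4)) * t) = qexp (Z (2,4)) * (qexp (Z (2,4) * Z (2,3)) * (qexp (Z (2,3)) * t)) := pent_t hZ24 hZ23 hq_23__24 rfl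
  have rel_12__34 : Z (1,2) * Z (3,4) = (qq ^ (0 : ℤ)) • (Z (3,4) * Z (1,2)) := by
    have h := hrel (1,2) (by decide) (3,4) (by decide)
    rwa [show Bfun (1,2) (3,4) = (0 : ℤ) from by decide] at h
  have eq_12__34 : Z (1,2) * Z (3,4) = Z (3,4) * Z (1,2) := rel_to_comm rel_12__34
  have s23 : qexp (Z (1,2)) * qexp (Z (3,4)) = qexp (Z (3,4)) * qexp (Z (1,2)) := qexp_comm hZ12 hZ34 eq_12__34
  have s24 : ∀ t : A, qexp (Z (1,3)) * (qexp (Z (2,3)) * t) = qexp (Z (2,3)) * (qexp (Z (2,3) * Z (1,3)) * (qexp (Z (1,3)) * t)) := pent_t hZ23 hZ13 hq_13__23 rfl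
  have rel_23__13_12 : Z (2,3) * (Z (1,3) * Z (1,2)) = (qq ^ (0 : ℤ)) • ((Z (1,3) * Z (1,2)) * Z (2,3)) := rel_comp_right (by norm_num : (-1:ℤ) + (1:ℤ) = 0) rel_23__13 rel_23__12
  have eq_23__13_12 : Z (2,3) * (Z (1,3) * Z (1,2)) = (Z (1,3) * Z (1,2)) * Z (2,3) := rel_to_comm rel_23__13_12
  have s25 : ∀ t : A, qexp (Z (2,3)) * (qexp (Z (1,3) * Z (1,2)) * t) = qexp (Z (1,3) * Z (1,2)) * (qexp (Z (2,3)) * t) := swap_t hZ23 nil_13_12 eq_23__13_12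
  have hq_34__23 : Z (3,4) * Z (2,3) = qq • (Z (2,3) * Z (3,4)) := rel_to_q rel_34__23
  have s26 : ∀ t : A, qexp (Z (3,4)) * (qexp (Z (2,3)) * t) = qexp (Z (2,3)) * (qexp (Z (2,3) * Z (3,4)) * (qexp (Z (3,4)) * t)) := pent_t hZ23 hZ34 hq_34__23 rfl
  have rel_13__34 : Z (1,3) * Z (3,4) = (qq ^ (0 : ℤ)) • (Z (3,4) * Z (1,3)) := by
    have h := hrel (1,3) (by decide) (3,4) (by decide)
    rwa [show Bfun (1,3) (3,4) = (0 : ℤ) from by decide] at h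
  have rel_13_12__34 : (Z (1,3) * Z (1,2)) * Z (3,4) = (qq ^ (0 : ℤ)) • (Z (3,4) * (Z (1,3) * Z (1,2))) := rel_comp_left (by norm_num : (0:ℤ) + (0:ℤ) = 0) rel_13__34 rel_12__34
  have eq_13_12__34 : (Z (1,3) * Z (1,2)) * Z (3,4) = Z (3,4) * (Z (1,3) * Z (1,2)) := rel_to_comm rel_13_12__34
  have s27 : ∀ t : A, qexp (Z (1,3) * Z (1,2)) * (qexp (Z (3,4)) * t) = qexp (Z (3,4)) * (qexp (Z (1,3) * Z (1,2)) * t) := swap_t nil_13_12 hZ34 eq_13_12__34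
  have eq_13__34 : Z (1,3) * Z (3,4) = Z (3,4) * Z (1,3) := rel_to_comm rel_13__34
  have s28 : ∀ t : A, qexp (Z (1,3)) * (qexp (Z (3,4)) * t) = qexp (Z (3,4)) * (qexp (Z (1,3)) * t) := swap_t hZ13 hZ34 eq_13__34
  simp only [mul_assoc]
  conv_lhs => rw [s1, s2, s3, s4, s5, s6, s7, s8, s9, s10, s11, s12, s13, ← s14, s15, s16, ← s17, s18, s19, s20, ← s21, s22, s23, ← s24, s25, ← s26, s27, s28]
end

section
/- Define T_N = ∏→_{λ ∈ Λ_N} E(Z_{a,b} Z_{a+1,b+1} ··· Z_{a+c−b−1,c−1}) where Λ_N = {(a,b,c) : 1 ≤ a < b < c ≤ N+1} is ordered lexicographically and the Z's are generators of the quantum torus T_N of the quiver Q_N. Then T_N = μ2(T_N), where μ2 is the anti-automorphism μ2(Z_{ij}) = Z_{N+1−j,N+1−i}; moreover this equality can be established purely by permuting mutually commuting quantum-exponential factors. -/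
/-- The list of triples `(a,b,c)` with `1 ≤ a < b < c ≤ M`, in lexicographic order
(the set `Λ_N` with `M = N + 1`). -/
def tripleList (M : ℕ) : List (ℕ × ℕ × ℕ) :=
  (((List.range (M + 1)).flatMap fun a =>
      (List.range (M + 1)).flatMap fun b =>
        (List.range (M + 1)).map fun c => (a, b, c)).filter
    fun t => decide (1 ≤ t.1 ∧ t.1 < t.2.1 ∧ t.2.1 < t.2.2 ∧ t.2.2 ≤ M))

/-- The element `T_N`: the lexicographically ordered product over
`Λ_N = {(a,b,c) : 1 ≤ a < b < c ≤ N+1}` of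
`E(Z_{a,b} Z_{a+1,b+1} ⋯ Z_{a+c-b-1,c-1})`. -/
noncomputable def Tel {A : Type*} [Ring A] [Algebra (RatFunc ℚ) A] [TopologicalSpace A]
    (N : ℕ) (Z : ℕ × ℕ → A) : A :=
  ((tripleList (N + 1)).map fun t =>
    qexp (((List.range (t.2.2 - t.2.1)).map fun k => Z (t.1 + k, t.2.1 + k)).prod)).prod

namespace TelAux

/-! ### elementary helpers -/

def lt3 (t u : ℕ × ℕ × ℕ) : Prop :=
  t.1 < u.1 ∨ (t.1 = u.1 ∧ (t.2.1 < u.2.1 ∨ (t.2.1 = u.2.1 ∧ t.2.2 < u.2.2)))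

def sg (M : ℕ) (t : ℕ × ℕ × ℕ) : ℕ × ℕ × ℕ :=
  (M + 1 - t.2.2, M + 1 + t.2.1 - t.1 - t.2.2, M + 1 - t.1)

def vfun (t : ℕ × ℕ × ℕ) (k : ℕ) : ℕ × ℕ := (t.1 + k, t.2.1 + k)

def vl (t : ℕ × ℕ × ℕ) : List (ℕ × ℕ) := (List.range (t.2.2 - t.2.1)).map (vfun t)

lemma mem_vertexSet {N : ℕ} {v : ℕ × ℕ} :
    v ∈ vertexSet N ↔ 1 ≤ v.1 ∧ v.1 < v.2 ∧ v.2 ≤ N := by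
  obtain ⟨i, j⟩ := v
  simp only [vertexSet, Finset.mem_filter, Finset.mem_product, Finset.mem_Icc]
  omega

lemma mem_tripleList {M : ℕ} {t : ℕ × ℕ × ℕ} :
    t ∈ tripleList M ↔ 1 ≤ t.1 ∧ t.1 < t.2.1 ∧ t.2.1 < t.2.2 ∧ t.2.2 ≤ M := by
  obtain ⟨a, b, c⟩ := t
  simp only [tripleList, List.mem_filter, List.mem_flatMap, List.mem_map, List.mem_range,
    decide_eq_true_eq, Prod.mk.injEq]
  constructor
  · rintro ⟨-, h⟩; exact h
  · rintro h
    exact ⟨⟨a, by omega, b, by omega, c, by omega, rfl, rfl, rfl⟩, h⟩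

lemma pairwise_tripleList (M : ℕ) : (tripleList M).Pairwise lt3 := by
  apply List.Pairwise.filter
  rw [List.pairwise_flatMap]
  constructor
  · intro a _
    rw [List.pairwise_flatMap]
    constructor
    · intro b _
      rw [List.pairwise_map]
      exact (List.pairwise_lt_range).imp fun h => Or.inr ⟨rfl, Or.inr ⟨rfl, h⟩⟩
    · refine (List.pairwise_lt_range).imp ?_
      intro b b' hbb x hx y hy
      simp only [List.mem_map, List.mem_range] at hx hy
      obtain ⟨c, -, rfl⟩ := hx; obtain ⟨c', -, rfl⟩ := hy
      exact Or.inr ⟨rfl, Or.inl hbb⟩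
  · refine (List.pairwise_lt_range).imp ?_
    intro a a' haa x hx y hy
    simp only [List.mem_flatMap, List.mem_map, List.mem_range] at hx hy
    obtain ⟨b, -, c, -, rfl⟩ := hx
    obtain ⟨b', -, c', -, rfl⟩ := hy
    exact Or.inl haa

lemma lt3_irrefl (t : ℕ × ℕ × ℕ) : ¬ lt3 t t := by simp [lt3]

lemma nodup_tripleList (M : ℕ) : (tripleList M).Nodup :=
  (pairwise_tripleList M).imp (fun {a b} h => by rintro rfl; exact lt3_irrefl _ h)

lemma reverse_map_range {β : Type*} (L : ℕ) (g : ℕ → β) :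
    ((List.range L).map g).reverse = (List.range L).map (fun k => g (L - 1 - k)) := by
  apply List.ext_getElem
  · simp
  · intro n h1 h2
    simp only [List.getElem_reverse, List.getElem_map, List.getElem_range, List.length_reverse,
      List.length_map, List.length_range] at *

/-! ### integer sum computation -/

lemma list_sum_ite (L k0 : ℕ) (x : ℤ) (h : k0 < L) :
    (((List.range L).map fun k => if k = k0 then x else 0).sum) = x := by
  induction L with
  | zero => omega
  | succ L ih =>
    rw [List.range_succ, List.map_append, List.sum_append]
    by_cases hk : k0 < L
    · rw [ih hk]
      have : ¬ (L = k0) := by omega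
      simp [this]
    · have hk0 : k0 = L := by omega
      subst hk0
      have h0 : ((List.range k0).map fun k => if k = k0 then x else 0).sum = 0 := by
        apply List.sum_eq_zero
        intro z hz
        simp only [List.mem_map, List.mem_range] at hz
        obtain ⟨k, hk, rfl⟩ := hz
        simp [Nat.ne_of_lt hk]
      rw [h0]; simp

lemma list_sum_add (l : List ℕ) (f g : ℕ → ℤ) :
    (l.map fun k => f k + g k).sum = (l.map f).sum + (l.map g).sum := by
  induction l with
  | nil => simp
  | cons a t ih => simp [ih]; ring

lemma Bsum_zero (M a b c a' b' c' l : ℕ)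
    (h1 : 1 ≤ a) (h2 : a < b) (h3 : b < c) (h4 : c ≤ M)
    (h5 : 1 ≤ a') (h6 : a' < b') (h7 : b' < c') (h8 : c' ≤ M)
    (hl : l < c' - b')
    (hlex : a < a' ∨ (a = a' ∧ (b < b' ∨ (b = b' ∧ c < c'))))
    (hlex2 : c' < c ∨ (c = c' ∧ (b + a' < b' + a ∨ (b + a' = b' + a ∧ a' < a)))) :
    ((List.range (c - b)).map fun k => Bfun (a + k, b + k) (a' + l, b' + l)).sum = 0 := by
  by_cases hd0 : b' + a = b + a'
  · have hpt : ∀ k, Bfun (a + k, b + k) (a' + l, b' + l)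
        = (if k = a' + l + 1 - a then (1:ℤ) else 0) + (if k = a' + l - 1 - a then (-1:ℤ) else 0) := by
      intro k
      simp only [Bfun, Prod.mk.injEq]
      split_ifs <;> omega
    rw [List.map_congr_left fun k _ => hpt k, list_sum_add,
      list_sum_ite _ _ _ (by omega), list_sum_ite _ _ _ (by omega)]
    ring
  · by_cases hd1 : b' + a = b + a' + 1
    · have hpt : ∀ k, Bfun (a + k, b + k) (a' + l, b' + l)
          = (if k = a' + l - a then (1:ℤ) else 0) + (if k = a' + l + 1 - a then (-1:ℤ) else 0) := by
        intro k
        simp only [Bfun, Prod.mk.injEq]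
        split_ifs <;> omega
      rw [List.map_congr_left fun k _ => hpt k, list_sum_add,
        list_sum_ite _ _ _ (by omega), list_sum_ite _ _ _ (by omega)]
      ring
    · by_cases hd2 : b + a' = b' + a + 1
      · have hpt : ∀ k, Bfun (a + k, b + k) (a' + l, b' + l)
            = (if k = a' + l - 1 - a then (1:ℤ) else 0) + (if k = a' + l - a then (-1:ℤ) else 0) := by
          intro k
          simp only [Bfun, Prod.mk.injEq]
          split_ifs <;> omega
        rw [List.map_congr_left fun k _ => hpt k, list_sum_add,
          list_sum_ite _ _ _ (by omega), list_sum_ite _ _ _ (by omega)]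
        ring
      · apply List.sum_eq_zero
        intro z hz
        simp only [List.mem_map, List.mem_range] at hz
        obtain ⟨k, -, rfl⟩ := hz
        simp only [Bfun, Prod.mk.injEq]
        split_ifs <;> omega

/-! ### generic algebra lemmas -/

variable {A : Type*} [Ring A] [Algebra (RatFunc ℚ) A]

lemma antihom_pow (μ : A →ₗ[RatFunc ℚ] A) (hμone : μ 1 = 1)
    (hμmul : ∀ x y : A, μ (x * y) = μ y * μ x) (x : A) :
    ∀ n : ℕ, μ (x ^ n) = (μ x) ^ n := by
  intro n
  induction n with
  | zero => simpa using hμone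
  | succ n ih => rw [pow_succ, hμmul, ih, pow_succ']

lemma antihom_list_prod (μ : A →ₗ[RatFunc ℚ] A) (hμone : μ 1 = 1)
    (hμmul : ∀ x y : A, μ (x * y) = μ y * μ x) :
    ∀ l : List A, μ l.prod = (l.reverse.map μ).prod := by
  intro l
  induction l with
  | nil => simpa using hμone
  | cons x t ih =>
    rw [List.prod_cons, hμmul, ih, List.reverse_cons, List.map_append, List.prod_append]
    simp

lemma qcomm_pow_right (c : RatFunc ℚ) (x y : A) (h : y * x = c • (x * y)) :
    ∀ n : ℕ, y * x ^ n = c ^ n • (x ^ n * y) := by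
  intro n
  induction n with
  | zero => simp
  | succ n ih =>
    rw [pow_succ, ← mul_assoc, ih, smul_mul_assoc, mul_assoc, h, mul_smul_comm, smul_smul,
      pow_succ, mul_assoc]

lemma qcomm_prod_nilpotent (c : RatFunc ℚ) (x y : A) (h : y * x = c • (x * y))
    {m : ℕ} (hx : x ^ m = 0) : (x * y) ^ m = 0 := by
  have key : ∀ n : ℕ, ∃ d : RatFunc ℚ, (x * y) ^ n = d • (x ^ n * y ^ n) := by
    intro n
    induction n with
    | zero => exact ⟨1, by simp⟩
    | succ n ih =>
      obtain ⟨d, hd⟩ := ih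
      refine ⟨d * c ^ n, ?_⟩
      rw [pow_succ', hd, mul_smul_comm, mul_assoc x, ← mul_assoc y,
        qcomm_pow_right c x y h n, smul_mul_assoc, mul_assoc, ← pow_succ' y,
        mul_smul_comm, smul_smul, ← mul_assoc, ← pow_succ']
  obtain ⟨d, hd⟩ := key m
  rw [hd, hx]
  simp

section TopA
variable [TopologicalSpace A] [T2Space A]

lemma qexp_eq_sum {x : A} {m : ℕ} (hx : x ^ m = 0) :
    qexp x = ∑ n ∈ Finset.range m, qcoef n • x ^ n := by
  apply tsum_eq_sum
  intro n hn
  rw [pow_eq_zero_of_le (by simpa using hn) hx, smul_zero]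

lemma antihom_qexp (μ : A →ₗ[RatFunc ℚ] A) (hμone : μ 1 = 1)
    (hμmul : ∀ x y : A, μ (x * y) = μ y * μ x) {x : A} {m : ℕ} (hx : x ^ m = 0) :
    μ (qexp x) = qexp (μ x) := by
  have hμx : (μ x) ^ m = 0 := by
    rw [← antihom_pow μ hμone hμmul, hx, map_zero]
  rw [qexp_eq_sum hx, qexp_eq_sum hμx, map_sum]
  refine Finset.sum_congr rfl fun n _ => ?_
  rw [map_smul, antihom_pow μ hμone hμmul]

lemma commute_qexp {x y : A} (hx : IsNilpotent x) (hy : IsNilpotent y)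
    (h : Commute x y) : Commute (qexp x) (qexp y) := by
  obtain ⟨m, hm⟩ := hx
  obtain ⟨m', hm'⟩ := hy
  rw [qexp_eq_sum hm, qexp_eq_sum hm']
  apply Commute.sum_left
  intro i _
  apply Commute.sum_right
  intro j _
  exact ((h.pow_pow i j).smul_left _).smul_right _

end TopA

/-! ### q-commutation of products of generators -/

section Z
variable (N : ℕ) (Z : ℕ × ℕ → A)
  (hrel : ∀ v ∈ vertexSet N, ∀ w ∈ vertexSet N,
      Z v * Z w = ((RatFunc.X : RatFunc ℚ) ^ (Bfun v w)) • (Z w * Z v))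

include hrel

lemma qswap_list (w : ℕ × ℕ) (hw : w ∈ vertexSet N) :
    ∀ l : List (ℕ × ℕ), (∀ v ∈ l, v ∈ vertexSet N) →
      (l.map Z).prod * Z w
        = ((RatFunc.X : RatFunc ℚ) ^ ((l.map fun v => Bfun v w).sum)) •
            (Z w * (l.map Z).prod) := by
  intro l
  induction l with
  | nil => intro _; simp
  | cons v t ih =>
    intro hmem
    have hv := hmem v List.mem_cons_self
    have ht := fun x hx => hmem x (List.mem_cons_of_mem _ hx)
    rw [List.map_cons, List.prod_cons, mul_assoc, ih ht, mul_smul_comm, ← mul_assoc,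
      hrel v hv w hw, smul_mul_assoc, smul_smul, List.map_cons, List.sum_cons,
      zpow_add₀ (RatFunc.X_ne_zero),
      mul_comm ((RatFunc.X : RatFunc ℚ) ^ ((t.map fun v => Bfun v w).sum)),
      mul_assoc]

lemma nilpotent_prod (hnil : ∀ v ∈ vertexSet N, IsNilpotent (Z v)) :
    ∀ l : List (ℕ × ℕ), l ≠ [] → (∀ v ∈ l, v ∈ vertexSet N) →
      IsNilpotent ((l.map Z).prod) := by
  intro l
  match l with
  | [] => intro h; exact absurd rfl h
  | v :: t =>
    intro _ hmem
    have hv := hmem v List.mem_cons_self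
    have ht := fun x hx => hmem x (List.mem_cons_of_mem _ hx)
    obtain ⟨m, hm⟩ := hnil v hv
    have hsw := qswap_list N Z hrel v hv t ht
    refine ⟨m, ?_⟩
    rw [List.map_cons, List.prod_cons]
    exact qcomm_prod_nilpotent _ _ _ hsw hm

end Z

/-! ### the permutation lemma -/

lemma prod_eq_of_perm_commute {α : Type*} {Mo : Type*} [Monoid Mo] (f : α → Mo)
    (r₁ r₂ : α → α → Prop) (hirr : ∀ x, ¬ r₂ x x) :
    ∀ (l₁ l₂ : List α), l₁.Perm l₂ → l₁.Pairwise r₁ → l₂.Pairwise r₂ →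
      (∀ x ∈ l₁, ∀ y ∈ l₁, r₁ x y → r₂ y x → Commute (f x) (f y)) →
      (l₁.map f).prod = (l₂.map f).prod := by
  intro l₁
  induction l₁ with
  | nil =>
    intro l₂ hp _ _ _
    rw [hp.symm.eq_nil]
  | cons a t ih =>
    intro l₂ hp h1 h2 hc
    have ha : a ∈ l₂ := hp.subset List.mem_cons_self
    obtain ⟨u, v, rfl⟩ := List.append_of_mem ha
    have hp' : t.Perm (u ++ v) := (List.perm_cons a).mp (hp.trans List.perm_middle)
    have h2' : (u ++ v).Pairwise r₂ :=
      h2.sublist ((List.sublist_cons_self a v).append_left u)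
    have hxt : ∀ x ∈ u, x ∈ t := by
      intro x hx
      have hx2 : x ∈ a :: t := hp.symm.subset (by simp [hx])
      rcases List.mem_cons.mp hx2 with rfl | h
      · exact absurd ((List.pairwise_append.mp h2).2.2 x hx x List.mem_cons_self)
          (hirr x)
      · exact h
    have hca : ∀ x ∈ u, Commute (f a) (f x) := fun x hx =>
      hc a List.mem_cons_self x (List.mem_cons_of_mem _ (hxt x hx))
        (List.rel_of_pairwise_cons h1 (hxt x hx))
        ((List.pairwise_append.mp h2).2.2 x hx a List.mem_cons_self)
    have hcu : Commute (f a) ((u.map f).prod) := by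
      apply Commute.list_prod_right
      intro z hz
      obtain ⟨x, hx, rfl⟩ := List.mem_map.mp hz
      exact hca x hx
    have hIH : (t.map f).prod = ((u ++ v).map f).prod :=
      ih (u ++ v) hp' h1.of_cons h2'
        (fun x hx y hy => hc x (List.mem_cons_of_mem _ hx) y (List.mem_cons_of_mem _ hy))
    calc ((a :: t).map f).prod = f a * (t.map f).prod := by simp
      _ = f a * ((u.map f).prod * (v.map f).prod) := by rw [hIH]; simp [List.prod_append]
      _ = (u.map f).prod * (f a * (v.map f).prod) := by
          rw [← mul_assoc, hcu.eq, mul_assoc]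
      _ = ((u ++ a :: v).map f).prod := by simp [List.prod_append]

end TelAux

open TelAux in
/-- `T_N = μ₂(T_N)` where `μ₂` is the anti-automorphism with
`μ₂(Z_{ij}) = Z_{N+1-j,N+1-i}` (the generators `Z_{ij}` of the quantum torus of `Q_N`
being realized by nilpotent `q`-commuting elements of a topological algebra). -/
theorem Tel_mu2_invariant {A : Type*} [Ring A] [Algebra (RatFunc ℚ) A]
    [TopologicalSpace A] [T2Space A] (N : ℕ) (hN : 2 ≤ N) (Z : ℕ × ℕ → A)
    (hrel : ∀ v ∈ vertexSet N, ∀ w ∈ vertexSet N,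
      Z v * Z w = ((RatFunc.X : RatFunc ℚ) ^ (Bfun v w)) • (Z w * Z v))
    (hnil : ∀ v ∈ vertexSet N, IsNilpotent (Z v))
    (μ : A →ₗ[RatFunc ℚ] A) (hμone : μ 1 = 1)
    (hμmul : ∀ x y : A, μ (x * y) = μ y * μ x)
    (hμZ : ∀ i j : ℕ, 1 ≤ i → i < j → j ≤ N →
      μ (Z (i, j)) = Z (N + 1 - j, N + 1 - i)) :
    μ (Tel N Z) = Tel N Z := by
  classical
  set TL := tripleList (N + 1) with hTL
  set f : ℕ × ℕ × ℕ → A := fun t => qexp (((vl t).map Z).prod) with hf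
  -- `Tel` in terms of `f`
  have hTel : Tel N Z = (TL.map f).prod := by
    rw [Tel]
    congr 1
    apply List.map_congr_left
    intro t _
    simp only [hf, vl, List.map_map]
    rfl
  -- vertex membership of monomial entries
  have hvmem : ∀ t ∈ TL, ∀ v ∈ vl t, v ∈ vertexSet N := by
    intro t ht v hv
    obtain ⟨hb1, hb2, hb3, hb4⟩ := mem_tripleList.mp ht
    simp only [vl, List.mem_map, List.mem_range, vfun] at hv
    obtain ⟨k, hk, rfl⟩ := hv
    rw [mem_vertexSet]
    simp only
    omega
  have hvlne : ∀ t ∈ TL, vl t ≠ [] := by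
    intro t ht
    obtain ⟨hb1, hb2, hb3, hb4⟩ := mem_tripleList.mp ht
    simp only [vl, ne_eq, List.map_eq_nil_iff, List.range_eq_nil]
    omega
  have hnilp : ∀ t ∈ TL, IsNilpotent (((vl t).map Z).prod) := fun t ht =>
    nilpotent_prod N Z hrel hnil (vl t) (hvlne t ht) (hvmem t ht)
  -- sg is an involution of the index set
  have hsgmem : ∀ t ∈ TL, sg (N + 1) t ∈ TL := by
    intro t ht
    have h := mem_tripleList.mp ht
    rw [hTL, mem_tripleList]
    simp only [sg]
    omega
  have hsgsg : ∀ t ∈ TL, sg (N + 1) (sg (N + 1) t) = t := by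
    intro t ht
    have h := mem_tripleList.mp ht
    obtain ⟨a, b, c⟩ := t
    simp only [sg, Prod.mk.injEq] at *
    omega
  -- μ maps a monomial to the monomial of sg t
  have hμmono : ∀ t ∈ TL, μ (((vl t).map Z).prod) = ((vl (sg (N + 1) t)).map Z).prod := by
    intro t ht
    have h := mem_tripleList.mp ht
    obtain ⟨a, b, c⟩ := t
    simp only at h
    rw [antihom_list_prod μ hμone hμmul]
    simp only [vl, List.map_map]
    rw [reverse_map_range, List.map_map]
    have hlen : (sg (N + 1) (a, b, c)).2.2 - (sg (N + 1) (a, b, c)).2.1 = c - b := by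
      simp only [sg]; omega
    rw [hlen]
    congr 1
    apply List.map_congr_left
    intro k hk
    rw [List.mem_range] at hk
    simp only [Function.comp, vfun]
    rw [hμZ (a + (c - b - 1 - k)) (b + (c - b - 1 - k)) (by omega) (by omega) (by omega)]
    congr 1
    simp only [sg, Prod.mk.injEq]
    omega
  -- the commutation of inverted pairs
  have hcommZ : ∀ t ∈ TL, ∀ u ∈ TL, lt3 t u → lt3 (sg (N + 1) t) (sg (N + 1) u) →
      Commute (((vl t).map Z).prod) (((vl u).map Z).prod) := by
    intro t ht u hu hl hl2
    have hbt := mem_tripleList.mp ht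
    have hbu := mem_tripleList.mp hu
    apply Commute.list_prod_right
    intro z hz
    obtain ⟨w, hw, rfl⟩ := List.mem_map.mp hz
    simp only [vl, List.mem_map, List.mem_range, vfun] at hw
    obtain ⟨l, hlr, rfl⟩ := hw
    have hwmem : (u.1 + l, u.2.1 + l) ∈ vertexSet N := by
      rw [mem_vertexSet]; simp only; omega
    have hsw := qswap_list N Z hrel (u.1 + l, u.2.1 + l) hwmem (vl t) (hvmem t ht)
    have hsum : ((vl t).map fun v => Bfun v (u.1 + l, u.2.1 + l)).sum = 0 := by
      simp only [vl, List.map_map]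
      have hlex : t.1 < u.1 ∨ (t.1 = u.1 ∧ (t.2.1 < u.2.1 ∨ (t.2.1 = u.2.1 ∧ t.2.2 < u.2.2))) := hl
      have hlex2 : u.2.2 < t.2.2 ∨ (t.2.2 = u.2.2 ∧
          (t.2.1 + u.1 < u.2.1 + t.1 ∨ (t.2.1 + u.1 = u.2.1 + t.1 ∧ u.1 < t.1))) := by
        simp only [lt3, sg] at hl2
        omega
      exact Bsum_zero (N + 1) t.1 t.2.1 t.2.2 u.1 u.2.1 u.2.2 l hbt.1 hbt.2.1 hbt.2.2.1
        hbt.2.2.2 hbu.1 hbu.2.1 hbu.2.2.1 hbu.2.2.2 hlr hlex hlex2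
    rw [hsum, zpow_zero, one_smul] at hsw
    exact hsw
  -- the two orderings multiply to the same element
  have hperm : TL.Perm (TL.reverse.map (sg (N + 1))) := by
    have hnd : (TL.reverse.map (sg (N + 1))).Nodup := by
      apply List.Nodup.map_on
      · intro x hx y hy hxy
        rw [List.mem_reverse] at hx hy
        rw [← hsgsg x hx, hxy, hsgsg y hy]
      · exact List.nodup_reverse.mpr (nodup_tripleList _)
    have hsub : (TL.reverse.map (sg (N + 1))) ⊆ TL := by
      intro x hx
      obtain ⟨y, hy, rfl⟩ := List.mem_map.mp hx
      exact hsgmem y (List.mem_reverse.mp hy)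
    exact ((hnd.subperm hsub).perm_of_length_le (by simp)).symm
  have hpw2 : (TL.reverse.map (sg (N + 1))).Pairwise
      (fun t u => lt3 (sg (N + 1) u) (sg (N + 1) t)) := by
    rw [List.pairwise_map, List.pairwise_reverse]
    refine (pairwise_tripleList _).imp_of_mem ?_
    intro x y hx hy hxy
    rw [hsgsg x hx, hsgsg y hy]
    exact hxy
  have key : (TL.map f).prod = ((TL.reverse.map (sg (N + 1))).map f).prod := by
    apply prod_eq_of_perm_commute f lt3 (fun t u => lt3 (sg (N + 1) u) (sg (N + 1) t))
      (fun x => lt3_irrefl _) TL _ hperm (pairwise_tripleList _) hpw2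
    intro x hx y hy h1 h2
    exact commute_qexp (hnilp x hx) (hnilp y hy) (hcommZ x hx y hy h1 h2)
  -- assemble
  rw [hTel, antihom_list_prod μ hμone hμmul, ← List.map_reverse, List.map_map]
  rw [key]
  rw [List.map_map]
  congr 1
  apply List.map_congr_left
  intro t ht
  rw [List.mem_reverse] at ht
  simp only [Function.comp, hf]
  obtain ⟨m, hm⟩ := hnilp t ht
  rw [antihom_qexp μ hμone hμmul hm, hμmono t ht]
end
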